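/- Let P be a dynamic path instance and let k ≥ 1 be an integer. Then for all indices with 1 ≤ i ≤ j ≤ n, Θᵏ(P_{i,j}) ≤ Θᵏ(P_{i−1,j}); and for all indices with 0 ≤ i ≤ j < n, Θᵏ(P_{i,j}) ≤ Θᵏ(P_{i,j+1}). That is, extending a subpath by one vertex on either side cannot decrease its optimal k-sink evacuation time. -/
import Mathlib


/-- A dynamic path instance: `n+1` vertices at strictly increasing coordinates
`x 0 < x 1 < ⋯ < x n`, natural-number weights `w i`, positive integer capacities
`c j` (capacity of the edge from `x (j-1)` to `x j`, for `1 ≤ j ≤ n`), and a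
positive travel time `τ` per unit distance. -/
structure DPath where
  n : ℕ
  x : ℕ → ℝ
  w : ℕ → ℕ
  c : ℕ → ℕ
  τ : ℝ
  hx : ∀ i, i < n → x i < x (i + 1)
  hc : ∀ j, 1 ≤ j → j ≤ n → 0 < c j
  hτ : 0 < τ

/-- `P.W a i = w_a + ⋯ + w_i`. -/
def DPath.W (P : DPath) (a i : ℕ) : ℕ := ∑ j ∈ Finset.Icc a i, P.w j

/-- For a sink at `y` in subpath `P_{a,b}`: the minimum capacity
`min_{i+1 ≤ j ≤ k+1} c_j`, where `k` is the index with `x_k < y ≤ x_{k+1}`;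
the edges `j` with `i+1 ≤ j ≤ k+1` are exactly those with `i+1 ≤ j ≤ b` and
`x (j-1) < y`. -/
noncomputable def DPath.cL (P : DPath) (b : ℕ) (y : ℝ) (i : ℕ) : ℕ :=
  sInf (P.c '' {j | i + 1 ≤ j ∧ j ≤ b ∧ P.x (j - 1) < y})

/-- For a sink at `y` in subpath `P_{a,b}`: the minimum capacity
`min_{k+1 ≤ j ≤ i} c_j`, where `k` is the index with `x_k ≤ y < x_{k+1}`;
the edges `j` with `k+1 ≤ j ≤ i` are exactly those with `a+1 ≤ j ≤ i` and
`y < x j`. -/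
noncomputable def DPath.cR (P : DPath) (a : ℕ) (y : ℝ) (i : ℕ) : ℕ :=
  sInf (P.c '' {j | a + 1 ≤ j ∧ j ≤ i ∧ y < P.x j})

/-- Left evacuation time `Θ_L(P_{a,b}, y)`: the maximum, over indices `i` with
`a ≤ i ≤ b`, `x i < y` and `W_{a,i} ≥ 1`, of
`(y − x_i)·τ + ⌈W_{a,i} / min_{i+1 ≤ j ≤ k+1} c_j⌉ − 1`; it is `0` if no such
index exists. -/
noncomputable def ThetaL (P : DPath) (a b : ℕ) (y : ℝ) : ℝ :=
  sSup (insert 0 {t : ℝ | ∃ i, a ≤ i ∧ i ≤ b ∧ P.x i < y ∧ 1 ≤ P.W a i ∧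
    t = (y - P.x i) * P.τ + (⌈(P.W a i : ℝ) / (P.cL b y i : ℝ)⌉ : ℝ) - 1})

/-- Right evacuation time `Θ_R(P_{a,b}, y)`. -/
noncomputable def ThetaR (P : DPath) (a b : ℕ) (y : ℝ) : ℝ :=
  sSup (insert 0 {t : ℝ | ∃ i, a ≤ i ∧ i ≤ b ∧ y < P.x i ∧ 1 ≤ P.W i b ∧
    t = (P.x i - y) * P.τ + (⌈(P.W i b : ℝ) / (P.cR a y i : ℝ)⌉ : ℝ) - 1})

/-- Evacuation time of subpath `P_{a,b}` to sink `y`. -/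
noncomputable def Theta (P : DPath) (a b : ℕ) (y : ℝ) : ℝ :=
  max (ThetaL P a b y) (ThetaR P a b y)

/-- `Θ¹(P_{a,b})`: minimum 1-sink evacuation time of subpath `P_{a,b}`
over sinks `y ∈ [x_a, x_b]`. -/
noncomputable def Theta1 (P : DPath) (a b : ℕ) : ℝ :=
  sInf (Theta P a b '' Set.Icc (P.x a) (P.x b))

/-- `Θᵏ(P_{a,b})`: minimum over all partitions of `{a, …, b}` into at most `k`
nonempty intervals `[f j, f (j+1) - 1]`, of the maximum over the intervals of
`Θ¹`. -/
noncomputable def ThetaK (P : DPath) (k a b : ℕ) : ℝ :=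
  sInf {t : ℝ | ∃ (m : ℕ) (f : ℕ → ℕ), 1 ≤ m ∧ m ≤ k ∧
    f 0 = a ∧ f m = b + 1 ∧ (∀ j, j < m → f j < f (j + 1)) ∧
    t = ⨆ j : Fin m, Theta1 P (f j.val) (f (j.val + 1) - 1)}


section Aux

variable {P : DPath}

lemma x_lt (P : DPath) : ∀ {i j : ℕ}, i < j → j ≤ P.n → P.x i < P.x j := by
  intro i j hij hj
  induction j with
  | zero => omega
  | succ j ih =>
    rcases Nat.lt_or_ge i j with h | h
    · exact (ih h (by omega)).trans (P.hx j (by omega))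
    · have hij' : i = j := by omega
      subst hij'; exact P.hx i (by omega)

lemma x_le (P : DPath) {i j : ℕ} (hij : i ≤ j) (hj : j ≤ P.n) : P.x i ≤ P.x j := by
  rcases eq_or_lt_of_le hij with rfl | h
  · exact le_rfl
  · exact (x_lt P h hj).le

lemma W_mono_left (P : DPath) {a a' : ℕ} (h : a' ≤ a) (i : ℕ) : P.W a i ≤ P.W a' i :=
  Finset.sum_le_sum_of_subset (Finset.Icc_subset_Icc_left h)

lemma W_mono_right (P : DPath) {b b' : ℕ} (h : b ≤ b') (i : ℕ) : P.W i b ≤ P.W i b' :=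
  Finset.sum_le_sum_of_subset (Finset.Icc_subset_Icc_right h)

lemma bddL (P : DPath) (a b : ℕ) (y : ℝ) :
    BddAbove (insert 0 {t : ℝ | ∃ i, a ≤ i ∧ i ≤ b ∧ P.x i < y ∧ 1 ≤ P.W a i ∧
      t = (y - P.x i) * P.τ + (⌈(P.W a i : ℝ) / (P.cL b y i : ℝ)⌉ : ℝ) - 1}) := by
  apply Set.Finite.bddAbove
  apply Set.Finite.insert
  apply Set.Finite.subset ((Set.finite_Icc a b).image
    (fun i => (y - P.x i) * P.τ + (⌈(P.W a i : ℝ) / (P.cL b y i : ℝ)⌉ : ℝ) - 1))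
  rintro t ⟨i, h1, h2, _, _, rfl⟩
  exact ⟨i, ⟨h1, h2⟩, rfl⟩

lemma bddR (P : DPath) (a b : ℕ) (y : ℝ) :
    BddAbove (insert 0 {t : ℝ | ∃ i, a ≤ i ∧ i ≤ b ∧ y < P.x i ∧ 1 ≤ P.W i b ∧
      t = (P.x i - y) * P.τ + (⌈(P.W i b : ℝ) / (P.cR a y i : ℝ)⌉ : ℝ) - 1}) := by
  apply Set.Finite.bddAbove
  apply Set.Finite.insert
  apply Set.Finite.subset ((Set.finite_Icc a b).image
    (fun i => (P.x i - y) * P.τ + (⌈(P.W i b : ℝ) / (P.cR a y i : ℝ)⌉ : ℝ) - 1))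
  rintro t ⟨i, h1, h2, _, _, rfl⟩
  exact ⟨i, ⟨h1, h2⟩, rfl⟩

lemma ThetaL_nonneg (P : DPath) (a b : ℕ) (y : ℝ) : 0 ≤ ThetaL P a b y :=
  le_csSup (bddL P a b y) (Set.mem_insert _ _)

lemma ThetaR_nonneg (P : DPath) (a b : ℕ) (y : ℝ) : 0 ≤ ThetaR P a b y :=
  le_csSup (bddR P a b y) (Set.mem_insert _ _)

lemma Theta_nonneg (P : DPath) (a b : ℕ) (y : ℝ) : 0 ≤ Theta P a b y :=
  le_trans (ThetaL_nonneg P a b y) (le_max_left _ _)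

lemma cL_facts (P : DPath) {b b' i : ℕ} {y y' : ℝ} (hb : b ≤ b') (hbn : b' ≤ P.n)
    (hy : y ≤ y') (hib : i < b) (hxi : P.x i < y) :
    0 < P.cL b' y' i ∧ P.cL b' y' i ≤ P.cL b y i := by
  have hmem : P.c (i+1) ∈ P.c '' {j | i + 1 ≤ j ∧ j ≤ b ∧ P.x (j - 1) < y} :=
    ⟨i+1, ⟨le_rfl, by omega, by simpa using hxi⟩, rfl⟩
  have hsub : (P.c '' {j | i + 1 ≤ j ∧ j ≤ b ∧ P.x (j - 1) < y}) ⊆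
      P.c '' {j | i + 1 ≤ j ∧ j ≤ b' ∧ P.x (j - 1) < y'} := by
    rintro t ⟨j, ⟨h1, h2, h3⟩, rfl⟩
    exact ⟨j, ⟨h1, by omega, lt_of_lt_of_le h3 hy⟩, rfl⟩
  constructor
  · have hne : (P.c '' {j | i + 1 ≤ j ∧ j ≤ b' ∧ P.x (j - 1) < y'}).Nonempty :=
      ⟨_, hsub hmem⟩
    obtain ⟨j, ⟨h1, h2, _⟩, hj⟩ := Nat.sInf_mem hne
    rw [DPath.cL, ← hj]
    exact P.hc j (by omega) (by omega)
  · exact csInf_le_csInf (OrderBot.bddBelow _) ⟨_, hmem⟩ hsub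

lemma cR_facts (P : DPath) {a a' i : ℕ} {y y' : ℝ} (ha : a' ≤ a) (hin : i ≤ P.n)
    (hy : y' ≤ y) (hai : a < i) (hxi : y < P.x i) :
    0 < P.cR a' y' i ∧ P.cR a' y' i ≤ P.cR a y i := by
  have hmem : P.c i ∈ P.c '' {j | a + 1 ≤ j ∧ j ≤ i ∧ y < P.x j} :=
    ⟨i, ⟨by omega, le_rfl, hxi⟩, rfl⟩
  have hsub : (P.c '' {j | a + 1 ≤ j ∧ j ≤ i ∧ y < P.x j}) ⊆
      P.c '' {j | a' + 1 ≤ j ∧ j ≤ i ∧ y' < P.x j} := by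
    rintro t ⟨j, ⟨h1, h2, h3⟩, rfl⟩
    exact ⟨j, ⟨by omega, h2, lt_of_le_of_lt hy h3⟩, rfl⟩
  constructor
  · have hne : (P.c '' {j | a' + 1 ≤ j ∧ j ≤ i ∧ y' < P.x j}).Nonempty := ⟨_, hsub hmem⟩
    obtain ⟨j, ⟨h1, h2, _⟩, hj⟩ := Nat.sInf_mem hne
    rw [DPath.cR, ← hj]
    exact P.hc j (by omega) (by omega)
  · exact csInf_le_csInf (OrderBot.bddBelow _) ⟨_, hmem⟩ hsub

lemma ceil_div_le {W W' c c' : ℕ} (hW : W ≤ W') (hc : c' ≤ c) (hc' : 0 < c') :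
    (⌈(W:ℝ)/(c:ℝ)⌉ : ℝ) ≤ (⌈(W':ℝ)/(c':ℝ)⌉ : ℝ) := by
  have h : (W:ℝ)/(c:ℝ) ≤ (W':ℝ)/(c':ℝ) :=
    div_le_div₀ (by positivity) (by exact_mod_cast hW) (by exact_mod_cast hc')
      (by exact_mod_cast hc)
  exact_mod_cast Int.ceil_le_ceil h

lemma ThetaL_le (P : DPath) {a a' b b' : ℕ} {y y' : ℝ}
    (ha : a' ≤ a) (hb : b ≤ b') (hbn : b' ≤ P.n) (hy : y ≤ y') (hyb : y ≤ P.x b) :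
    ThetaL P a b y ≤ ThetaL P a' b' y' := by
  apply csSup_le (Set.insert_nonempty _ _)
  rintro t (rfl | ⟨i, hai, hib, hxi, hW, rfl⟩)
  · exact ThetaL_nonneg P a' b' y'
  · have hib' : i < b := by
      rcases eq_or_lt_of_le hib with rfl | h
      · exact absurd hxi (not_lt.mpr hyb)
      · exact h
    obtain ⟨hpos, hle⟩ := cL_facts P hb hbn hy hib' hxi
    have hterm : (y - P.x i) * P.τ + (⌈(P.W a i : ℝ) / (P.cL b y i : ℝ)⌉ : ℝ) - 1 ≤
        (y' - P.x i) * P.τ + (⌈(P.W a' i : ℝ) / (P.cL b' y' i : ℝ)⌉ : ℝ) - 1 := by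
      have h1 : (y - P.x i) * P.τ ≤ (y' - P.x i) * P.τ :=
        mul_le_mul_of_nonneg_right (by linarith) P.hτ.le
      have h2 := ceil_div_le (W_mono_left P ha i) hle hpos
      linarith
    refine le_trans hterm (le_csSup (bddL P a' b' y') (Set.mem_insert_of_mem _
      ⟨i, ha.trans hai, by omega, lt_of_lt_of_le hxi hy,
        le_trans hW (W_mono_left P ha i), rfl⟩))

lemma ThetaR_le (P : DPath) {a a' b b' : ℕ} {y y' : ℝ}
    (ha : a' ≤ a) (hb : b ≤ b') (hbn : b' ≤ P.n) (hy : y' ≤ y) (hya : P.x a ≤ y) :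
    ThetaR P a b y ≤ ThetaR P a' b' y' := by
  apply csSup_le (Set.insert_nonempty _ _)
  rintro t (rfl | ⟨i, hai, hib, hxi, hW, rfl⟩)
  · exact ThetaR_nonneg P a' b' y'
  · have hai' : a < i := by
      rcases eq_or_lt_of_le hai with rfl | h
      · exact absurd hxi (not_lt.mpr hya)
      · exact h
    obtain ⟨hpos, hle⟩ := cR_facts P ha (by omega) hy hai' hxi
    have hterm : (P.x i - y) * P.τ + (⌈(P.W i b : ℝ) / (P.cR a y i : ℝ)⌉ : ℝ) - 1 ≤
        (P.x i - y') * P.τ + (⌈(P.W i b' : ℝ) / (P.cR a' y' i : ℝ)⌉ : ℝ) - 1 := by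
      have h1 : (P.x i - y) * P.τ ≤ (P.x i - y') * P.τ :=
        mul_le_mul_of_nonneg_right (by linarith) P.hτ.le
      have h2 := ceil_div_le (W_mono_right P hb i) hle hpos
      linarith
    refine le_trans hterm (le_csSup (bddR P a' b' y') (Set.mem_insert_of_mem _
      ⟨i, by omega, by omega, lt_of_le_of_lt hy hxi,
        le_trans hW (W_mono_right P hb i), rfl⟩))

lemma ThetaL_endpoint (P : DPath) {a b : ℕ} (hab : a ≤ b) (hbn : b ≤ P.n) :
    ThetaL P a b (P.x a) = 0 := by
  have hset : {t : ℝ | ∃ i, a ≤ i ∧ i ≤ b ∧ P.x i < P.x a ∧ 1 ≤ P.W a i ∧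
      t = (P.x a - P.x i) * P.τ +
        (⌈(P.W a i : ℝ) / (P.cL b (P.x a) i : ℝ)⌉ : ℝ) - 1} = ∅ := by
    ext t
    simp only [Set.mem_setOf_eq, Set.mem_empty_iff_false, iff_false]
    rintro ⟨i, h1, h2, h3, _⟩
    exact absurd h3 (not_lt.mpr (x_le P h1 (h2.trans hbn)))
  rw [ThetaL, hset]
  simp

lemma ThetaR_endpoint (P : DPath) {a b : ℕ} (hab : a ≤ b) (hbn : b ≤ P.n) :
    ThetaR P a b (P.x b) = 0 := by
  have hset : {t : ℝ | ∃ i, a ≤ i ∧ i ≤ b ∧ P.x b < P.x i ∧ 1 ≤ P.W i b ∧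
      t = (P.x i - P.x b) * P.τ +
        (⌈(P.W i b : ℝ) / (P.cR a (P.x b) i : ℝ)⌉ : ℝ) - 1} = ∅ := by
    ext t
    simp only [Set.mem_setOf_eq, Set.mem_empty_iff_false, iff_false]
    rintro ⟨i, h1, h2, h3, _⟩
    exact absurd h3 (not_lt.mpr (x_le P h2 hbn))
  rw [ThetaR, hset]
  simp

lemma Theta_le_interior (P : DPath) {a a' b b' : ℕ} {y : ℝ} (ha : a' ≤ a) (hb : b ≤ b')
    (hbn : b' ≤ P.n) (hya : P.x a ≤ y) (hyb : y ≤ P.x b) :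
    Theta P a b y ≤ Theta P a' b' y :=
  max_le_max (ThetaL_le P ha hb hbn le_rfl hyb) (ThetaR_le P ha hb hbn le_rfl hya)

lemma Theta_le_leftbdry (P : DPath) {a a' b : ℕ} {y' : ℝ} (ha : a' ≤ a) (hab : a ≤ b)
    (hbn : b ≤ P.n) (hy : y' ≤ P.x a) : Theta P a b (P.x a) ≤ Theta P a' b y' := by
  rw [Theta, ThetaL_endpoint P hab hbn]
  exact max_le (Theta_nonneg P a' b y')
    (le_trans (ThetaR_le P ha le_rfl hbn hy le_rfl) (le_max_right _ _))

lemma Theta_le_rightbdry (P : DPath) {a b b' : ℕ} {y' : ℝ} (hab : a ≤ b) (hb : b ≤ b')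
    (hbn : b' ≤ P.n) (hy : P.x b ≤ y') : Theta P a b (P.x b) ≤ Theta P a b' y' := by
  rw [Theta, ThetaR_endpoint P hab (hb.trans hbn)]
  exact max_le
    (le_trans (ThetaL_le P le_rfl hb hbn hy le_rfl) (le_max_left _ _))
    (Theta_nonneg P a b' y')

lemma Theta1_nonneg (P : DPath) (a b : ℕ) : 0 ≤ Theta1 P a b := by
  apply Real.sInf_nonneg
  rintro t ⟨y, _, rfl⟩
  exact Theta_nonneg P a b y

lemma Theta1_left (P : DPath) {a b : ℕ} (ha : 1 ≤ a) (hab : a ≤ b) (hbn : b ≤ P.n) :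
    Theta1 P a b ≤ Theta1 P (a - 1) b := by
  have hbdd : BddBelow (Theta P a b '' Set.Icc (P.x a) (P.x b)) :=
    ⟨0, by rintro t ⟨y, _, rfl⟩; exact Theta_nonneg P a b y⟩
  apply le_csInf
  · exact ⟨Theta P (a-1) b (P.x b), ⟨P.x b, ⟨x_le P (by omega) hbn, le_rfl⟩, rfl⟩⟩
  rintro t ⟨y, ⟨hy1, hy2⟩, rfl⟩
  rcases lt_or_ge y (P.x a) with h | h
  · calc Theta1 P a b ≤ Theta P a b (P.x a) :=
        csInf_le hbdd ⟨P.x a, ⟨le_rfl, x_le P hab hbn⟩, rfl⟩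
      _ ≤ Theta P (a-1) b y := Theta_le_leftbdry P (by omega) hab hbn h.le
  · calc Theta1 P a b ≤ Theta P a b y := csInf_le hbdd ⟨y, ⟨h, hy2⟩, rfl⟩
      _ ≤ Theta P (a-1) b y := Theta_le_interior P (by omega) le_rfl hbn h hy2

lemma Theta1_right (P : DPath) {a b : ℕ} (hab : a ≤ b) (hbn : b + 1 ≤ P.n) :
    Theta1 P a b ≤ Theta1 P a (b + 1) := by
  have hbdd : BddBelow (Theta P a b '' Set.Icc (P.x a) (P.x b)) :=
    ⟨0, by rintro t ⟨y, _, rfl⟩; exact Theta_nonneg P a b y⟩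
  apply le_csInf
  · exact ⟨Theta P a (b+1) (P.x a), ⟨P.x a, ⟨le_rfl, x_le P (by omega) hbn⟩, rfl⟩⟩
  rintro t ⟨y, ⟨hy1, hy2⟩, rfl⟩
  rcases lt_or_ge (P.x b) y with h | h
  · calc Theta1 P a b ≤ Theta P a b (P.x b) :=
        csInf_le hbdd ⟨P.x b, ⟨x_le P hab (by omega), le_rfl⟩, rfl⟩
      _ ≤ Theta P a (b+1) y := Theta_le_rightbdry P hab (by omega) hbn h.le
  · calc Theta1 P a b ≤ Theta P a b y := csInf_le hbdd ⟨y, ⟨hy1, h⟩, rfl⟩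
      _ ≤ Theta P a (b+1) y := Theta_le_interior P le_rfl (by omega) hbn hy1 h

lemma f_mono {f : ℕ → ℕ} {m : ℕ} (hinc : ∀ j, j < m → f j < f (j + 1)) :
    ∀ p q, p ≤ q → q ≤ m → f p ≤ f q := by
  intro p q hpq hq
  induction q with
  | zero => simp [Nat.le_zero.mp hpq]
  | succ q ih =>
    rcases Nat.lt_or_ge p (q+1) with h | h
    · exact le_trans (ih (by omega) (by omega)) (hinc q (by omega)).le
    · have hpq' : p = q + 1 := by omega
      subst hpq'; exact le_rfl

lemma thetaKSet_bddBelow (P : DPath) (k a b : ℕ) :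
    BddBelow {t : ℝ | ∃ (m : ℕ) (f : ℕ → ℕ), 1 ≤ m ∧ m ≤ k ∧
      f 0 = a ∧ f m = b + 1 ∧ (∀ j, j < m → f j < f (j + 1)) ∧
      t = ⨆ j : Fin m, Theta1 P (f j.val) (f (j.val + 1) - 1)} := by
  refine ⟨0, ?_⟩
  rintro t ⟨m, f, hm, _, _, _, _, rfl⟩
  exact Real.iSup_nonneg fun j => Theta1_nonneg P _ _

lemma thetaKSet_nonempty (P : DPath) (k a b : ℕ) (hk : 1 ≤ k) (hab : a ≤ b) :
    {t : ℝ | ∃ (m : ℕ) (f : ℕ → ℕ), 1 ≤ m ∧ m ≤ k ∧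
      f 0 = a ∧ f m = b + 1 ∧ (∀ j, j < m → f j < f (j + 1)) ∧
      t = ⨆ j : Fin m, Theta1 P (f j.val) (f (j.val + 1) - 1)}.Nonempty := by
  refine ⟨_, 1, fun j => if j = 0 then a else b + 1, le_rfl, hk, by simp, by simp, ?_, rfl⟩
  intro j hj
  have hj0 : j = 0 := by omega
  subst hj0
  simp
  omega

end Aux

/-- extending a subpath by one vertex on either side cannot
decrease its optimal `k`-sink evacuation time. -/
theorem stmt10 (P : DPath) (k : ℕ) (hk : 1 ≤ k) :
    (∀ i j, 1 ≤ i → i ≤ j → j ≤ P.n → ThetaK P k i j ≤ ThetaK P k (i - 1) j) ∧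
    (∀ i j, i ≤ j → j < P.n → ThetaK P k i j ≤ ThetaK P k i (j + 1)) := by
  constructor
  · -- left extension
    intro i j hi hij hjn
    apply le_csInf (thetaKSet_nonempty P k (i-1) j hk (by omega))
    rintro t ⟨m, f, hm1, hmk, hf0, hfm, hinc, rfl⟩
    have hmono := f_mono hinc
    have hbddF : BddAbove (Set.range fun l : Fin m =>
        Theta1 P (f l.val) (f (l.val + 1) - 1)) :=
      Set.Finite.bddAbove (Set.finite_range _)
    haveI : Nonempty (Fin m) := ⟨⟨0, by omega⟩⟩
    by_cases hc1 : f 1 = i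
    · -- drop the first interval
      have hm2 : 2 ≤ m := by
        by_contra h
        have hm1' : m = 1 := by omega
        rw [hm1'] at hfm
        omega
      refine le_trans (csInf_le (thetaKSet_bddBelow P k i j)
        ⟨m - 1, fun l => f (l + 1), by omega, by omega, hc1, by
          show f (m - 1 + 1) = j + 1
          rw [show m - 1 + 1 = m by omega]; exact hfm,
          fun l hl => hinc (l+1) (by omega), rfl⟩) ?_
      haveI : Nonempty (Fin (m-1)) := ⟨⟨0, by omega⟩⟩
      apply ciSup_le
      intro l
      exact le_ciSup_of_le hbddF ⟨l.val + 1, by omega⟩ le_rfl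
    · -- move the left endpoint of the first interval
      have hf1 : i < f 1 := by
        have h01 : f 0 < f 1 := hinc 0 (by omega)
        omega
      refine le_trans (csInf_le (thetaKSet_bddBelow P k i j)
        ⟨m, fun l => if l = 0 then i else f l, hm1, hmk, by simp, by
          show (if m = 0 then i else f m) = j + 1
          rw [if_neg (by omega)]; exact hfm, ?_, rfl⟩) ?_
      · intro l hl
        show (if l = 0 then i else f l) < (if l + 1 = 0 then i else f (l + 1))
        by_cases h0 : l = 0
        · subst h0
          rw [if_pos rfl, if_neg (by omega)]
          exact hf1
        · rw [if_neg h0, if_neg (by omega)]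
          exact hinc l hl
      · apply ciSup_le
        intro l
        refine le_ciSup_of_le hbddF l ?_
        show Theta1 P (if (l.val : ℕ) = 0 then i else f l.val)
          ((if l.val + 1 = 0 then i else f (l.val + 1)) - 1) ≤ _
        rcases Nat.eq_zero_or_pos l.val with h0 | h0
        · have hfb : f 1 ≤ j + 1 := by
            have := hmono 1 m hm1 le_rfl
            omega
          rw [h0, if_pos rfl, if_neg (by omega), hf0]
          simp only [Nat.zero_add]
          exact Theta1_left P hi (by omega) (by omega)
        · rw [if_neg (by omega), if_neg (by omega)]
  · -- right extension
    intro i j hij hjn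
    apply le_csInf (thetaKSet_nonempty P k i (j+1) hk (by omega))
    rintro t ⟨m, f, hm1, hmk, hf0, hfm, hinc, rfl⟩
    have hmono := f_mono hinc
    have hbddF : BddAbove (Set.range fun l : Fin m =>
        Theta1 P (f l.val) (f (l.val + 1) - 1)) :=
      Set.Finite.bddAbove (Set.finite_range _)
    haveI : Nonempty (Fin m) := ⟨⟨0, by omega⟩⟩
    by_cases hc1 : f (m - 1) = j + 1
    · -- drop the last interval
      have hm2 : 2 ≤ m := by
        by_contra h
        have hm1' : m = 1 := by omega
        rw [hm1'] at hc1
        simp at hc1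
        omega
      refine le_trans (csInf_le (thetaKSet_bddBelow P k i j)
        ⟨m - 1, f, by omega, by omega, hf0, hc1, fun l hl => hinc l (by omega), rfl⟩) ?_
      haveI : Nonempty (Fin (m-1)) := ⟨⟨0, by omega⟩⟩
      apply ciSup_le
      intro l
      exact le_ciSup_of_le hbddF ⟨l.val, by omega⟩ le_rfl
    · -- move the right endpoint of the last interval
      have hfm1 : f (m - 1) < j + 1 := by
        have h01 := hinc (m-1) (by omega)
        rw [show m - 1 + 1 = m by omega, hfm] at h01
        omega
      refine le_trans (csInf_le (thetaKSet_bddBelow P k i j)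
        ⟨m, fun l => if l = m then j + 1 else f l, hm1, hmk, by
          show (if 0 = m then j + 1 else f 0) = i
          rw [if_neg (by omega)]; exact hf0, by
          show (if m = m then j + 1 else f m) = j + 1
          rw [if_pos rfl], ?_, rfl⟩) ?_
      · intro l hl
        show (if l = m then j + 1 else f l) < (if l + 1 = m then j + 1 else f (l + 1))
        by_cases h0 : l + 1 = m
        · rw [if_neg (by omega), if_pos h0]
          have : l = m - 1 := by omega
          rw [this]
          exact hfm1
        · rw [if_neg (by omega), if_neg h0]
          exact hinc l hl
      · apply ciSup_le
        intro l
        refine le_ciSup_of_le hbddF l ?_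
        show Theta1 P (if (l.val : ℕ) = m then j + 1 else f l.val)
          ((if l.val + 1 = m then j + 1 else f (l.val + 1)) - 1) ≤ _
        have hlm : l.val < m := l.isLt
        rw [if_neg (by omega)]
        by_cases h0 : l.val + 1 = m
        · rw [if_pos h0, h0, hfm]
          have hfl : f l.val = f (m - 1) := by rw [show l.val = m - 1 by omega]
          have h1 : f l.val ≤ j := by omega
          exact Theta1_right P h1 (by omega)
        · rw [if_neg h0]
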